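/- There exists a constant C > 0 such that for all h ∈ (0,1]: h + Σ_{k≥1} (2πk)^{-2} [1 − exp(−(2πk)² h)] ≤ C h^{1/2}. -/

import Mathlib

open Real

lemma aux_summable_inv_sq :
    Summable (fun k : ℕ => ((2 * Real.pi * ((k : ℝ) + 1)) ^ 2)⁻¹) := by
  have h0 : Summable (fun n : ℕ => ((n : ℝ) ^ 2)⁻¹) := by
    have := Real.summable_one_div_nat_pow.mpr (by norm_num : 1 < 2)
    simpa [one_div] using this
  have h1 : Summable (fun n : ℕ => (((n : ℝ) + 1) ^ 2)⁻¹) := by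
    have := (summable_nat_add_iff 1).mpr h0
    simpa [Nat.cast_add] using this
  have h2 := h1.mul_left ((2 * Real.pi) ^ 2)⁻¹
  refine h2.congr fun k => ?_
  have hπ := Real.pi_ne_zero
  have hk : ((k : ℝ) + 1) ≠ 0 := by positivity
  field_simp

/-- Series estimate for the time-regularity bound:
`h + Σ_{k ≥ 1} (2πk)⁻² (1 - exp(-(2πk)² h)) ≤ C h^{1/2}` for `h ∈ (0,1]`. -/
theorem series_time_estimate :
    ∃ C > 0, ∀ h : ℝ, 0 < h → h ≤ 1 →
      h + (∑' k : ℕ, ((2 * Real.pi * ((k : ℝ) + 1)) ^ 2)⁻¹ *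
          (1 - Real.exp (-(2 * Real.pi * ((k : ℝ) + 1)) ^ 2 * h)))
        ≤ C * h ^ ((1:ℝ)/2) := by
  refine ⟨4, by norm_num, fun h hh h1 => ?_⟩
  set f : ℕ → ℝ := fun k => ((2 * Real.pi * ((k : ℝ) + 1)) ^ 2)⁻¹ *
      (1 - Real.exp (-(2 * Real.pi * ((k : ℝ) + 1)) ^ 2 * h)) with hf
  set s := Real.sqrt h with hsdef
  have hs0 : 0 < s := Real.sqrt_pos.mpr hh
  have hs1 : s ≤ 1 := by
    rw [hsdef, show (1:ℝ) = Real.sqrt 1 by simp]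
    exact Real.sqrt_le_sqrt h1
  have hh2 : h = s ^ 2 := (Real.sq_sqrt hh.le).symm
  have hrp : h ^ ((1:ℝ)/2) = s := by
    rw [hsdef, Real.sqrt_eq_rpow]
  have hak : ∀ k : ℕ, 0 < 2 * Real.pi * ((k : ℝ) + 1) := fun k => by
    have : (0:ℝ) < (k : ℝ) + 1 := by positivity
    positivity
  -- pointwise bounds
  have hf_nonneg : ∀ k, 0 ≤ f k := by
    intro k
    apply mul_nonneg (by positivity)
    have : Real.exp (-(2 * Real.pi * ((k : ℝ) + 1)) ^ 2 * h) ≤ 1 := by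
      rw [← Real.exp_zero]
      exact Real.exp_le_exp.mpr (by nlinarith [hak k])
    linarith
  have hf_le_h : ∀ k, f k ≤ h := by
    intro k
    have ha := hak k
    have hexp : 1 - Real.exp (-(2 * Real.pi * ((k : ℝ) + 1)) ^ 2 * h)
        ≤ (2 * Real.pi * ((k : ℝ) + 1)) ^ 2 * h := by
      have := Real.add_one_le_exp (-(2 * Real.pi * ((k : ℝ) + 1)) ^ 2 * h)
      linarith
    calc f k ≤ ((2 * Real.pi * ((k : ℝ) + 1)) ^ 2)⁻¹ *
        ((2 * Real.pi * ((k : ℝ) + 1)) ^ 2 * h) := by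
          apply mul_le_mul_of_nonneg_left hexp (by positivity)
      _ = h := by field_simp
  have hf_le_inv : ∀ k, f k ≤ ((2 * Real.pi * ((k : ℝ) + 1)) ^ 2)⁻¹ := by
    intro k
    have : 1 - Real.exp (-(2 * Real.pi * ((k : ℝ) + 1)) ^ 2 * h) ≤ 1 := by
      have := Real.exp_pos (-(2 * Real.pi * ((k : ℝ) + 1)) ^ 2 * h)
      linarith
    calc f k ≤ ((2 * Real.pi * ((k : ℝ) + 1)) ^ 2)⁻¹ * 1 :=
        mul_le_mul_of_nonneg_left this (by positivity)
      _ = _ := mul_one _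
  have hsummable : Summable f :=
    Summable.of_nonneg_of_le hf_nonneg hf_le_inv aux_summable_inv_sq
  -- choose N
  set N : ℕ := ⌈s⁻¹⌉₊ with hN
  have hsinv1 : (1:ℝ) ≤ s⁻¹ := by
    rw [le_inv_comm₀ one_pos hs0]
    simpa using hs1
  have hN1 : 1 ≤ N := by
    rw [hN, Nat.one_le_ceil_iff]
    linarith
  have hNge : s⁻¹ ≤ (N : ℝ) := Nat.le_ceil _
  have hNlt : (N : ℝ) ≤ 2 * s⁻¹ := by
    have := Nat.ceil_lt_add_one (by positivity : (0:ℝ) ≤ s⁻¹)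
    rw [hN]
    linarith
  have hNpos : (0:ℝ) < N := by exact_mod_cast hN1
  -- split the sum
  have hsplit := hsummable.sum_add_tsum_nat_add N
  -- head bound
  have hhead : ∑ i ∈ Finset.range N, f i ≤ (N : ℝ) * h := by
    calc ∑ i ∈ Finset.range N, f i ≤ ∑ i ∈ Finset.range N, h :=
        Finset.sum_le_sum fun i _ => hf_le_h i
      _ = (N : ℝ) * h := by simp [mul_comm]
  -- tail bound
  set t : ℕ → ℝ := fun k => (4 * Real.pi ^ 2)⁻¹ *
      ((((k : ℝ) + N) * ((k : ℝ) + N + 1))⁻¹) with ht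
  have htail_le : ∀ k, f (k + N) ≤ t k := by
    intro k
    have hkN : (1:ℝ) ≤ (k : ℝ) + N := by
      have : (1:ℝ) ≤ (N : ℝ) := by exact_mod_cast hN1
      have : (0:ℝ) ≤ (k : ℝ) := Nat.cast_nonneg k
      linarith
    have hcast : ((k + N : ℕ) : ℝ) = (k : ℝ) + N := by push_cast; ring
    calc f (k + N) ≤ ((2 * Real.pi * (((k + N : ℕ) : ℝ) + 1)) ^ 2)⁻¹ := hf_le_inv _
      _ = (4 * Real.pi ^ 2)⁻¹ * ((((k : ℝ) + N + 1) ^ 2)⁻¹) := by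
          rw [hcast]; rw [mul_pow, mul_inv]; ring_nf
      _ ≤ t k := by
          rw [ht]
          apply mul_le_mul_of_nonneg_left _ (by positivity)
          apply inv_anti₀ (by nlinarith)
          nlinarith
  have hsum_t : ∀ n : ℕ, ∑ k ∈ Finset.range n, t k ≤ (4 * Real.pi ^ 2)⁻¹ * (N : ℝ)⁻¹ := by
    intro n
    have htel : ∑ k ∈ Finset.range n, ((((k : ℝ) + N) * ((k : ℝ) + N + 1))⁻¹)
        = (N : ℝ)⁻¹ - ((n : ℝ) + N)⁻¹ := by
      have := Finset.sum_range_sub' (fun i : ℕ => (((i : ℝ) + N))⁻¹) n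
      simp only [Nat.cast_zero, zero_add] at this
      rw [← this]
      apply Finset.sum_congr rfl
      intro i _
      have h1 : (0:ℝ) < (i : ℝ) + N := by
        have : (0:ℝ) < (N:ℝ) := hNpos
        have : (0:ℝ) ≤ (i : ℝ) := Nat.cast_nonneg i
        linarith
      have h2 : (0:ℝ) < (i : ℝ) + N + 1 := by linarith
      have h3 : ((i:ℝ) + N) ≠ 0 := h1.ne'
      have h4 : ((i:ℝ) + N + 1) ≠ 0 := h2.ne'
      push_cast
      rw [show ((i:ℝ) + 1 + N) = ((i:ℝ) + N + 1) by ring, inv_sub_inv h3 h4,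
        show ((i:ℝ) + N + 1) - ((i:ℝ) + N) = 1 by ring, one_div]
    rw [ht]
    simp only [← Finset.mul_sum]
    rw [htel]
    apply mul_le_mul_of_nonneg_left _ (by positivity)
    have : (0:ℝ) ≤ ((n : ℝ) + N)⁻¹ := by positivity
    linarith
  have ht_nonneg : ∀ k, 0 ≤ t k := by
    intro k
    have : (0:ℝ) < (k : ℝ) + N := by
      have : (0:ℝ) ≤ (k : ℝ) := Nat.cast_nonneg k
      linarith
    rw [ht]; positivity
  have ht_summable : Summable t :=
    summable_of_sum_range_le ht_nonneg hsum_t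
  have htail : (∑' k, f (k + N)) ≤ (4 * Real.pi ^ 2)⁻¹ * (N : ℝ)⁻¹ := by
    calc (∑' k, f (k + N)) ≤ ∑' k, t k :=
        Summable.tsum_le_tsum htail_le ((summable_nat_add_iff N).mpr hsummable) ht_summable
      _ ≤ (4 * Real.pi ^ 2)⁻¹ * (N : ℝ)⁻¹ :=
        Real.tsum_le_of_sum_range_le ht_nonneg hsum_t
  -- combine
  have htsum : (∑' k, f k) ≤ (N : ℝ) * h + (4 * Real.pi ^ 2)⁻¹ * (N : ℝ)⁻¹ := by
    rw [← hsplit]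
    exact add_le_add hhead htail
  -- numeric conclusion
  have hNh : (N : ℝ) * h ≤ 2 * s := by
    have e : 2 * s⁻¹ * h = 2 * s := by
      rw [hh2, sq, ← mul_assoc, mul_assoc 2 s⁻¹ s, inv_mul_cancel₀ hs0.ne', mul_one]
    calc (N : ℝ) * h ≤ 2 * s⁻¹ * h := mul_le_mul_of_nonneg_right hNlt hh.le
      _ = 2 * s := e
  have hNinv : (N : ℝ)⁻¹ ≤ s := by
    rw [inv_le_comm₀ hNpos hs0]
    exact hNge
  have hpi : (4 * Real.pi ^ 2)⁻¹ ≤ 1 := by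
    rw [inv_le_one_iff₀]
    right
    nlinarith [Real.pi_gt_three]
  have hpiN : (4 * Real.pi ^ 2)⁻¹ * (N : ℝ)⁻¹ ≤ s := by
    calc (4 * Real.pi ^ 2)⁻¹ * (N : ℝ)⁻¹ ≤ 1 * (N : ℝ)⁻¹ :=
        mul_le_mul_of_nonneg_right hpi (by positivity)
      _ = (N : ℝ)⁻¹ := one_mul _
      _ ≤ s := hNinv
  have hhs : h ≤ s := by
    rw [hh2]
    nlinarith
  rw [hrp]
  calc h + (∑' k, f k) ≤ s + ((N : ℝ) * h + (4 * Real.pi ^ 2)⁻¹ * (N : ℝ)⁻¹) :=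
      add_le_add hhs htsum
    _ ≤ s + (2 * s + s) := by linarith
    _ = 4 * s := by ring
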